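/- Let (B, {Ω^e}_{e∈ℰ}) be a model over a finite collection of environments ℰ, let G(B) be the DAG with an edge j → i whenever B_{ij} ≠ 0, and let 𝓘 := { j : ∃ e, f ∈ ℰ with Ω^e_{jj} ≠ Ω^f_{jj} } be the set of intervention targets. If a DAG 𝒟 on [p] is 𝓘-equivalent to G(B), then there exist a DAG matrix B~ compatible with 𝒟 and diagonal matrices {Ω~^e}_{e∈ℰ} with positive diagonal entries such that (I−B)⁻¹ Ω^e (I−B)⁻ᵀ = (I−B~)⁻¹ Ω~^e (I−B~)⁻ᵀ for every e ∈ ℰ. -/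

import Mathlib

open Matrix

/-- A matrix is a DAG (connectivity) matrix if it is strictly lower triangular up to a
simultaneous permutation of rows and columns (in particular it has zero diagonal). -/
def IsDagMatrix {p : ℕ} (B : Matrix (Fin p) (Fin p) ℝ) : Prop :=
  ∃ σ : Equiv.Perm (Fin p), ∀ i j : Fin p, σ i ≤ σ j → B i j = 0

/-- A noise-variance matrix: diagonal with positive diagonal entries. -/
def DiagPos {p : ℕ} (Ω : Matrix (Fin p) (Fin p) ℝ) : Prop :=
  Ω.IsDiag ∧ ∀ i, 0 < Ω i i

/-- The covariance matrix `(I − B)⁻¹ Ω (I − B)⁻ᵀ` entailed by the model `(B, Ω)`. -/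
noncomputable def CovOf {p : ℕ} (B Ω : Matrix (Fin p) (Fin p) ℝ) : Matrix (Fin p) (Fin p) ℝ :=
  (1 - B)⁻¹ * Ω * ((1 - B)⁻¹)ᵀ

/-- A directed graph on `[p]` (given as its edge relation, `D a b` meaning `a → b`)
is acyclic if it has no directed cycles. -/
def IsAcyclic {p : ℕ} (D : Fin p → Fin p → Prop) : Prop :=
  ∀ i, ¬ Relation.TransGen D i i

/-- The graph `G(B)` underlying a connectivity matrix `B`: an edge `j → i` whenever
`B i j ≠ 0`. -/
def graphOf {p : ℕ} (B : Matrix (Fin p) (Fin p) ℝ) : Fin p → Fin p → Prop :=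
  fun j i => B i j ≠ 0

/-- A matrix `B` is compatible with a graph `D` (written `B ∼ D`) if `B i j ≠ 0`
implies that `j → i` is an edge of `D`. -/
def Compatible {p : ℕ} (B : Matrix (Fin p) (Fin p) ℝ) (D : Fin p → Fin p → Prop) : Prop :=
  ∀ i j, B i j ≠ 0 → D j i

/-- Two directed graphs have the same skeleton: the same adjacencies ignoring direction. -/
def SameSkeleton {V : Type*} (D D' : V → V → Prop) : Prop :=
  ∀ a b, (D a b ∨ D b a) ↔ (D' a b ∨ D' b a)

/-- `(i, k, j)` is a v-structure: edges `i → k` and `j → k` with `i ≠ j` and `i, j`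
non-adjacent. -/
def IsVStruct {V : Type*} (D : V → V → Prop) (i k j : V) : Prop :=
  D i k ∧ D j k ∧ i ≠ j ∧ ¬ D i j ∧ ¬ D j i

/-- Two directed graphs have the same v-structures. -/
def SameVStructs {V : Type*} (D D' : V → V → Prop) : Prop :=
  ∀ i k j, IsVStruct D i k j ↔ IsVStruct D' i k j

/-- `𝓘`-equivalence of two DAGs: same skeleton, same v-structures, and the same parents
for every node in `𝓘`. -/
def IEquiv {p : ℕ} (I : Set (Fin p)) (D D' : Fin p → Fin p → Prop) : Prop :=
  SameSkeleton D D' ∧ SameVStructs D D' ∧ ∀ i ∈ I, ∀ j, D j i ↔ D' j i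

lemma acyclic_of_mono {p : ℕ} {R : Fin p → Fin p → Prop} {α : Type*} [Preorder α]
    (f : Fin p → α) (hf : ∀ a b, R a b → f a < f b) : IsAcyclic R := by
  intro i h
  have key : ∀ a b : Fin p, Relation.TransGen R a b → f a < f b := by
    intro a b h
    induction h with
    | single h => exact hf _ _ h
    | tail _ h₂ ih => exact lt_trans ih (hf _ _ h₂)
  exact lt_irrefl _ (key i i h)

lemma exists_mono_of_acyclic {p : ℕ} {R : Fin p → Fin p → Prop} (h : IsAcyclic R) :
    ∃ f : Fin p → ℕ, ∀ a b, R a b → f a < f b := by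
  classical
  refine ⟨fun a => (Finset.univ.filter (fun c => Relation.TransGen R c a)).card, ?_⟩
  intro a b hab
  apply Finset.card_lt_card
  rw [Finset.ssubset_iff_of_subset]
  · exact ⟨a, by simp [Relation.TransGen.single hab], by simpa using h a⟩
  · intro c hc
    simp only [Finset.mem_filter, Finset.mem_univ, true_and] at hc ⊢
    exact hc.tail hab

lemma isDagMatrix_of_acyclic {p : ℕ} {B : Matrix (Fin p) (Fin p) ℝ}
    (h : IsAcyclic (graphOf B)) : IsDagMatrix B := by
  classical
  obtain ⟨f, hf⟩ := exists_mono_of_acyclic h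
  set g : Fin p → ℕ ×ₗ Fin p := fun a => toLex (f a, a) with hg
  have hinj : Function.Injective g := by
    intro a b hab
    have := congrArg (fun x => (ofLex x).2) hab
    simpa [hg] using this
  set τ := Tuple.sort g with hτ
  have hmono : StrictMono (g ∘ τ) :=
    (Tuple.monotone_sort g).strictMono_of_injective (hinj.comp τ.injective)
  refine ⟨τ⁻¹, ?_⟩
  intro i j hij
  by_contra hBij
  have hgj : g j < g i := by
    have : f j < f i := hf j i hBij
    exact Prod.Lex.left _ _ this
  have : (g ∘ τ) (τ⁻¹ j) < (g ∘ τ) (τ⁻¹ i) := by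
    simpa using hgj
  have := hmono.lt_iff_lt.mp this
  exact absurd hij (not_le.mpr this)

lemma acyclic_graphOf_of_isDag {p : ℕ} {B : Matrix (Fin p) (Fin p) ℝ}
    (h : IsDagMatrix B) : IsAcyclic (graphOf B) := by
  obtain ⟨σ, hσ⟩ := h
  refine acyclic_of_mono (fun a => σ a) ?_
  intro a b hab
  by_contra hh
  exact hab (hσ b a (not_lt.mp hh))

lemma det_one_sub_of_isDag {p : ℕ} {B : Matrix (Fin p) (Fin p) ℝ}
    (h : IsDagMatrix B) : (1 - B).det = 1 := by
  classical
  obtain ⟨σ, hσ⟩ := h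
  have hdiag : ∀ i, B i i = 0 := fun i => hσ i i le_rfl
  have hsub : ((1 - B).submatrix ⇑σ.symm ⇑σ.symm).BlockTriangular OrderDual.toDual := by
    intro a b hab
    have hab' : (a : Fin p) < b := hab
    have hne : σ.symm a ≠ σ.symm b := by
      intro hcontra
      exact absurd (σ.symm.injective hcontra) (by rintro rfl; exact lt_irrefl _ hab')
    have hB0 : B (σ.symm a) (σ.symm b) = 0 := by
      apply hσ
      simp only [Equiv.apply_symm_apply]
      exact le_of_lt hab'
    simp [Matrix.submatrix_apply, Matrix.sub_apply, Matrix.one_apply, hne, hB0]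
  have := Matrix.det_of_lowerTriangular _ hsub
  rw [Matrix.det_submatrix_equiv_self σ.symm] at this
  rw [this]
  apply Finset.prod_eq_one
  intro i _
  simp [Matrix.sub_apply, Matrix.one_apply, hdiag]

lemma sum_two {p : ℕ} {x y : Fin p} (hxy : x ≠ y) (A C : ℝ) (g : Fin p → ℝ) :
    ∑ k, (if k = x then A else if k = y then C else 0) * g k = A * g x + C * g y := by
  classical
  have h : ∀ k : Fin p, (if k = x then A else if k = y then C else 0) * g k
      = (if k = x then A * g x else 0) + (if k = y then C * g y else 0) := by
    intro k
    by_cases h1 : k = x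
    · subst h1; simp [hxy]
    · by_cases h2 : k = y <;> simp [h1, h2, hxy.symm]
  rw [Finset.sum_congr rfl (fun k _ => h k), Finset.sum_add_distrib]
  simp

lemma sum_one {p : ℕ} (x : Fin p) (A : ℝ) (g : Fin p → ℝ) :
    ∑ k, (if k = x then A else 0) * g k = A * g x := by
  classical
  have h : ∀ k : Fin p, (if k = x then A else 0) * g k
      = (if k = x then A * g x else 0) := by
    intro k; by_cases h1 : k = x <;> simp [h1]
  rw [Finset.sum_congr rfl (fun k _ => h k)]
  simp

def matT {p : ℕ} (x y : Fin p) (b q r : ℝ) : Matrix (Fin p) (Fin p) ℝ :=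
  Matrix.of fun i j =>
    if i = x then (if j = x then q else if j = y then -r else 0)
    else if i = y then (if j = x then b else if j = y then 1 else 0)
    else if j = i then 1 else 0

def matU {p : ℕ} (x y : Fin p) (b q r : ℝ) : Matrix (Fin p) (Fin p) ℝ :=
  Matrix.of fun i j =>
    if i = x then (if j = x then 1 else if j = y then r else 0)
    else if i = y then (if j = x then -b else if j = y then q else 0)
    else if j = i then 1 else 0

def revB {p : ℕ} (B : Matrix (Fin p) (Fin p) ℝ) (x y : Fin p) (b r : ℝ) :
    Matrix (Fin p) (Fin p) ℝ :=
  Matrix.of fun i j =>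
    if i = y then (if j = x then 0 else B y j + b * B x j)
    else if i = x then (if j = y then r
      else B x j - r * (if j = x then 0 else B y j + b * B x j))
    else B i j

def revΩ {p : ℕ} (Ω : Matrix (Fin p) (Fin p) ℝ) (x y : Fin p) (b q r ωx ωy : ℝ) :
    Matrix (Fin p) (Fin p) ℝ :=
  Matrix.diagonal (fun i =>
    if i = x then q^2*ωx + r^2*ωy else if i = y then ωy + b^2*ωx else Ω i i)

section products
variable {p : ℕ} {x y : Fin p} {b q r ωx ωy : ℝ}

/-- Row formula for multiplication by `matT` on the left. -/
lemma matT_mul_apply (hxy : x ≠ y) (M : Matrix (Fin p) (Fin p) ℝ) (i j : Fin p) :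
    (matT x y b q r * M) i j =
      if i = x then q * M x j - r * M y j
      else if i = y then b * M x j + M y j
      else M i j := by
  classical
  rw [Matrix.mul_apply]
  by_cases hix : i = x
  · subst hix
    simp only [matT, Matrix.of_apply, eq_self_iff_true, if_true]
    rw [sum_two hxy q (-r) (fun k => M k j)]
    simp [if_pos rfl, hxy]
    ring
  · by_cases hiy : i = y
    · subst hiy
      simp only [matT, Matrix.of_apply, if_neg hix, eq_self_iff_true, if_true]
      rw [sum_two hxy b 1 (fun k => M k j)]
      simp [hix, hxy]
    · simp only [matT, Matrix.of_apply, if_neg hix, if_neg hiy]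
      rw [sum_one i 1 (fun k => M k j)]
      simp [hix, hiy]

lemma matU_mul_apply (hxy : x ≠ y) (M : Matrix (Fin p) (Fin p) ℝ) (i j : Fin p) :
    (matU x y b q r * M) i j =
      if i = x then M x j + r * M y j
      else if i = y then -b * M x j + q * M y j
      else M i j := by
  classical
  rw [Matrix.mul_apply]
  by_cases hix : i = x
  · subst hix
    simp only [matU, Matrix.of_apply, eq_self_iff_true, if_true]
    rw [sum_two hxy 1 r (fun k => M k j)]
    simp [hxy]
  · by_cases hiy : i = y
    · subst hiy
      simp only [matU, Matrix.of_apply, if_neg hix, eq_self_iff_true, if_true]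
      rw [sum_two hxy (-b) q (fun k => M k j)]
      try simp [hix, hxy]
    · simp only [matU, Matrix.of_apply, if_neg hix, if_neg hiy]
      rw [sum_one i 1 (fun k => M k j)]
      simp [hix, hiy]

lemma matU_mul_matT (hxy : x ≠ y) (hqr : q + r * b = 1) :
    matU x y b q r * matT x y b q r = 1 := by
  classical
  ext i j
  rw [matU_mul_apply hxy]
  by_cases hix : i = x <;> by_cases hiy : i = y <;> by_cases hjx : j = x <;> by_cases hjy : j = y <;>
    simp_all [matT, Matrix.one_apply, Ne.symm hxy] <;>
    first
      | linear_combination hqr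
      | linear_combination r * hqr
      | linear_combination (-r) * hqr
      | linear_combination b * hqr
      | linear_combination (-b) * hqr
      | ring1
      | (refine (if_neg ?_).symm; intro h; first | exact hjx h.symm | exact hjy h.symm)
      | exact fun h => hix h.symm
      | exact fun h => hiy h.symm
      | exact fun h => hjx h.symm
      | exact fun h => hjy h.symm
      | exact if_congr eq_comm rfl rfl

lemma matT_mul_matU (hxy : x ≠ y) (hqr : q + r * b = 1) :
    matT x y b q r * matU x y b q r = 1 := by
  classical
  ext i j
  rw [matT_mul_apply hxy]
  by_cases hix : i = x <;> by_cases hiy : i = y <;> by_cases hjx : j = x <;> by_cases hjy : j = y <;>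
    simp_all [matU, Matrix.one_apply, Ne.symm hxy] <;>
    first
      | linear_combination hqr
      | linear_combination r * hqr
      | linear_combination (-r) * hqr
      | linear_combination b * hqr
      | linear_combination (-b) * hqr
      | ring1
      | (refine (if_neg ?_).symm; intro h; first | exact hjx h.symm | exact hjy h.symm)
      | exact fun h => hix h.symm
      | exact fun h => hiy h.symm
      | exact fun h => hjx h.symm
      | exact fun h => hjy h.symm
      | exact if_congr eq_comm rfl rfl

lemma matT_mul_one_sub (hxy : x ≠ y) (B : Matrix (Fin p) (Fin p) ℝ)
    (hb : B y x = b) (hBxx : B x x = 0) (hByy : B y y = 0) (hBxy : B x y = 0)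
    (hqr : q + r * b = 1) :
    matT x y b q r * (1 - B) = 1 - revB B x y b r := by
  classical
  ext i j
  rw [matT_mul_apply hxy]
  by_cases hix : i = x <;> by_cases hiy : i = y <;> by_cases hjx : j = x <;> by_cases hjy : j = y <;>
    simp_all [revB, Matrix.sub_apply, Matrix.one_apply, Ne.symm hxy] <;>
    first
      | linear_combination hqr
      | linear_combination (B x j) * hqr
      | linear_combination (-(B x j)) * hqr
      | ring1
      | (rw [if_neg (show ¬ (x = j) from fun h => hjx h.symm),
             if_neg (show ¬ (y = j) from fun h => hjy h.symm)]
         first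
           | linear_combination (-(B x j)) * hqr
           | ring1)
      | simp [eq_comm]

lemma matT_mul_diag (hxy : x ≠ y) (Ω : Matrix (Fin p) (Fin p) ℝ)
    (hΩ : Ω.IsDiag) (hΩx : Ω x x = ωx) (hΩy : Ω y y = ωy)
    (hqb : q * (b * ωx) = r * ωy) :
    matT x y b q r * Ω * (matT x y b q r)ᵀ = revΩ Ω x y b q r ωx ωy := by
  classical
  have hΩ' : ∀ a c, Ω a c = if a = c then Ω a a else 0 := by
    intro a c
    by_cases h : a = c
    · simp [h]
    · simp [h, hΩ h]
  have hsym : Ωᵀ = Ω := by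
    ext a c
    by_cases h : a = c
    · rw [h]; rfl
    · rw [Matrix.transpose_apply, hΩ (fun hh => h hh.symm), hΩ h]
  have key : matT x y b q r * Ω * (matT x y b q r)ᵀ
      = matT x y b q r * (matT x y b q r * Ω)ᵀ := by
    rw [Matrix.transpose_mul, hsym, Matrix.mul_assoc]
  rw [key]
  ext i j
  rw [matT_mul_apply hxy]
  simp only [Matrix.transpose_apply, matT_mul_apply hxy]
  have h1 : Ω x y = 0 := hΩ hxy
  have h2 : Ω y x = 0 := hΩ (Ne.symm hxy)
  rw [hΩ' j x, hΩ' j y, hΩ' j i, hΩ' x i, hΩ' y i]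
  clear hΩ' hsym key
  by_cases hix : i = x <;> by_cases hiy : i = y <;> by_cases hjx : j = x <;> by_cases hjy : j = y <;>
    simp_all [revΩ, Matrix.diagonal_apply, Ne.symm hxy] <;>
    first
      | linear_combination hqb
      | linear_combination (-1 : ℝ) * hqb
      | ring1
      | (rw [if_neg (show ¬ (x = j) from fun h => hjx h.symm)])
      | (rw [if_neg (show ¬ (y = j) from fun h => hjy h.symm)])
      | (rw [if_neg (show ¬ (x = i) from fun h => hix h.symm),
             if_neg (show ¬ (y = i) from fun h => hiy h.symm)]; ring1)
      | (intro h; exact absurd h.symm hjx)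
      | (intro h; exact absurd h.symm hjy)
      | (by_cases hij : i = j
         · simp [hij]
         · rw [if_neg (show ¬ (j = i) from fun h => hij h.symm), if_neg hij])

lemma covOf_rev (hxy : x ≠ y) (B Ω : Matrix (Fin p) (Fin p) ℝ)
    (hb : B y x = b) (hBxx : B x x = 0) (hByy : B y y = 0) (hBxy : B x y = 0)
    (hqr : q + r * b = 1) (hqb : q * (b * ωx) = r * ωy)
    (hΩ : Ω.IsDiag) (hΩx : Ω x x = ωx) (hΩy : Ω y y = ωy)
    (hdet : IsUnit (1 - B).det) :
    CovOf B Ω = CovOf (revB B x y b r) (revΩ Ω x y b q r ωx ωy) := by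
  classical
  set T := matT x y b q r with hT
  set U := matU x y b q r with hU
  have hTU : T * U = 1 := matT_mul_matU hxy hqr
  have hUT : U * T = 1 := matU_mul_matT hxy hqr
  have hTB : T * (1 - B) = 1 - revB B x y b r := matT_mul_one_sub hxy B hb hBxx hByy hBxy hqr
  have h1 : (1 - B) * (1 - B)⁻¹ = 1 := Matrix.mul_nonsing_inv _ hdet
  have hrinv : (1 - revB B x y b r) * ((1 - B)⁻¹ * U) = 1 := by
    rw [← hTB, Matrix.mul_assoc, ← Matrix.mul_assoc (1 - B), h1, Matrix.one_mul, hTU]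
  have hinv' : (1 - revB B x y b r)⁻¹ = (1 - B)⁻¹ * U := Matrix.inv_eq_right_inv hrinv
  have hUTt : Tᵀ * Uᵀ = 1 := by rw [← Matrix.transpose_mul, hUT, Matrix.transpose_one]
  have cancel : ∀ X : Matrix (Fin p) (Fin p) ℝ, U * (T * X) = X := by
    intro X; rw [← Matrix.mul_assoc, hUT, Matrix.one_mul]
  have cancelT : ∀ X : Matrix (Fin p) (Fin p) ℝ, Tᵀ * (Uᵀ * X) = X := by
    intro X; rw [← Matrix.mul_assoc, hUTt, Matrix.one_mul]
  unfold CovOf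
  rw [hinv', ← matT_mul_diag hxy Ω hΩ hΩx hΩy hqb, Matrix.transpose_mul]
  simp only [Matrix.mul_assoc]
  rw [cancel, cancelT]

section chick
variable {p : ℕ} {G D : Fin p → Fin p → Prop}

lemma cyc1 (hG : IsAcyclic G) {a : Fin p} (h : G a a) : False :=
  hG a (Relation.TransGen.single h)

lemma cyc2 (hG : IsAcyclic G) {a b : Fin p} (h1 : G a b) (h2 : G b a) : False :=
  hG a ((Relation.TransGen.single h1).tail h2)

lemma cyc3 (hG : IsAcyclic G) {a b c : Fin p} (h1 : G a b) (h2 : G b c) (h3 : G c a) : False :=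
  hG a (((Relation.TransGen.single h1).tail h2).tail h3)

/-- Chickering's lemma: if two equivalent DAGs disagree on some edge, then there is a
disagreeing edge `x → y` of `G` that is covered in `G`. -/
lemma chickering (hG : IsAcyclic G) (hD : IsAcyclic D)
    (hskel : SameSkeleton G D) (hvs : SameVStructs G D)
    {a0 b0 : Fin p} (ha : G a0 b0) (hb : D b0 a0) :
    ∃ x y, G x y ∧ D y x ∧ (∀ z, G z y ↔ (G z x ∨ z = x)) := by
  classical
  obtain ⟨f, hf⟩ := exists_mono_of_acyclic hG
  -- heads of disagreeing edges
  set S : Finset (Fin p) := Finset.univ.filter (fun y' => ∃ x', G x' y' ∧ D y' x') with hS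
  have hSne : S.Nonempty := ⟨b0, by simp [hS]; exact ⟨a0, ha, hb⟩⟩
  obtain ⟨y, hyS, hymin⟩ := S.exists_min_image f hSne
  have hyS' : ∃ x', G x' y ∧ D y x' := by simpa [hS] using hyS
  set Sx : Finset (Fin p) := Finset.univ.filter (fun x' => G x' y ∧ D y x') with hSx
  have hSxne : Sx.Nonempty := by
    obtain ⟨x', hx'⟩ := hyS'
    exact ⟨x', by simp [hSx, hx'.1, hx'.2]⟩
  obtain ⟨x, hxS, hxmax⟩ := Sx.exists_max_image f hSxne
  have hGxy : G x y := by simpa [hSx] using (Finset.mem_filter.mp hxS).2 |>.1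
  have hDyx : D y x := by simpa [hSx] using (Finset.mem_filter.mp hxS).2 |>.2
  have hxny : x ≠ y := fun h => cyc1 hG (h ▸ hGxy)
  have hnGyx : ¬ G y x := fun h => cyc2 hG hGxy h
  have hnDxy : ¬ D x y := fun h => cyc2 hD h hDyx
  refine ⟨x, y, hGxy, hDyx, ?_⟩
  -- (a) parents of x are parents of y
  have ha' : ∀ z, G z x → G z y := by
    intro z hzx
    by_contra hzy
    have hzny : z ≠ y := fun h => hnGyx (h ▸ hzx)
    have hznx : z ≠ x := fun h => cyc1 hG (h ▸ hzx)
    have hnGyz : ¬ G y z := fun h => cyc3 hG h hzx hGxy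
    -- z and y are nonadjacent in G hence in D
    have hnadjD : ¬ D z y ∧ ¬ D y z := by
      have := (hskel z y).not  -- not adjacency
      have hnadj : ¬ (D z y ∨ D y z) := by
        rw [← hskel z y]
        tauto
      tauto
    by_cases hDzx : D z x
    · -- v-structure z → x ← y in D but not in G
      have hv : IsVStruct D z x y := ⟨hDzx, hDyx, hzny, hnadjD.1, hnadjD.2⟩
      have := (hvs z x y).mpr hv
      exact hnGyx this.2.1
    · -- then D x z, so x is the head of a disagreeing edge, contradicting minimality of y
      have hadj : D z x ∨ D x z := (hskel z x).mp (Or.inl hzx)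
      have hDxz : D x z := hadj.resolve_left hDzx
      have hxS2 : x ∈ S := by
        simp only [hS, Finset.mem_filter, Finset.mem_univ, true_and]
        exact ⟨z, hzx, hDxz⟩
      have := hymin x hxS2
      exact absurd (hf x y hGxy) (not_lt.mpr this)
  -- (b) parents of y are x or parents of x
  have hb' : ∀ z, G z y → (G z x ∨ z = x) := by
    intro z hzy
    by_cases hzx : z = x
    · exact Or.inr hzx
    refine Or.inl ?_
    by_contra hnzx
    have hzny : z ≠ y := fun h => cyc1 hG (h ▸ hzy)
    by_cases hGxz : G x z
    · -- x → z in G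
      by_cases hDyz : D y z
      · -- z is a disagreeing parent of y, contradicting maximality of x
        have hzS : z ∈ Sx := by
          simp only [hSx, Finset.mem_filter, Finset.mem_univ, true_and]
          exact ⟨hzy, hDyz⟩
        have := hxmax z hzS
        exact absurd (hf x z hGxz) (not_lt.mpr this)
      · have hDzy : D z y := ((hskel z y).mp (Or.inl hzy)).resolve_right hDyz
        by_cases hDxz : D x z
        · exact cyc3 hD hDxz hDzy hDyx
        · have hDzx : D z x := ((hskel x z).mp (Or.inl hGxz)).resolve_left hDxz
          -- z is the head of disagreeing edge (x, z)? no: edge x→z in G, z→x in D: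
          -- head z, and f z < f y, contradicting minimality of y
          have hzS2 : z ∈ S := by
            simp only [hS, Finset.mem_filter, Finset.mem_univ, true_and]
            exact ⟨x, hGxz, hDzx⟩
          have := hymin z hzS2
          exact absurd (hf z y hzy) (not_lt.mpr this)
    · -- z, x nonadjacent in G: v-structure z → y ← x in G but not in D
      have hv : IsVStruct G z y x := ⟨hzy, hGxy, hzx, hnzx, hGxz⟩
      have := (hvs z y x).mp hv
      exact cyc2 hD this.2.1 hDyx
  intro z
  constructor
  · exact hb' z
  · rintro (h | rfl)
    · exact ha' z h
    · exact hGxy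
end chick

def revG {p : ℕ} (G : Fin p → Fin p → Prop) (x y : Fin p) : Fin p → Fin p → Prop :=
  fun a b => (G a b ∧ ¬(a = x ∧ b = y)) ∨ (a = y ∧ b = x)

section revprops
variable {p : ℕ} {G : Fin p → Fin p → Prop} {x y : Fin p}

lemma revG_acyclic (hG : IsAcyclic G) (hGxy : G x y)
    (hcov : ∀ z, G z y ↔ (G z x ∨ z = x)) : IsAcyclic (revG G x y) := by
  classical
  obtain ⟨f, hf⟩ := exists_mono_of_acyclic hG
  have hxny : x ≠ y := fun h => cyc1 hG (h ▸ hGxy)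
  refine acyclic_of_mono (fun a => if a = y then (f x : ℚ) - 1/2 else (f a : ℚ)) ?_
  rintro a b (⟨hab, hne⟩ | ⟨ha, hb⟩)
  · by_cases hby : b = y
    · have hax : a ≠ x := fun h => hne ⟨h, hby⟩
      have hGay : G a y := hby ▸ hab
      have hGax : G a x := ((hcov a).mp hGay).resolve_right hax
      have hay : a ≠ y := fun h => cyc1 hG (h ▸ hGay)
      simp only [if_neg hay, if_pos hby]
      have : (f a : ℚ) + 1 ≤ f x := by exact_mod_cast hf a x hGax
      linarith
    · by_cases hay : a = y
      · simp only [if_pos hay, if_neg hby]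
        have h1 : (f x : ℚ) < f y := by exact_mod_cast hf x y hGxy
        have h2 : (f y : ℚ) < f b := by exact_mod_cast hf y b (hay ▸ hab)
        linarith
      · simp only [if_neg hay, if_neg hby]
        exact_mod_cast hf a b hab
  · have hbny : b ≠ y := fun h => hxny (hb.symm.trans h)
    simp only [if_pos ha, if_neg hbny, hb, if_neg hxny]
    linarith

lemma revG_skeleton (hG : IsAcyclic G) (hGxy : G x y) :
    SameSkeleton G (revG G x y) := by
  intro a b
  unfold revG
  by_cases hax : a = x <;> by_cases hby : b = y <;> by_cases hay : a = y <;>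
    by_cases hbx : b = x <;> subst_eqs <;>
    first
      | tauto
      | (constructor
         · intro h; tauto
         · intro h; tauto)

lemma revG_adj (hG : IsAcyclic G) (hGxy : G x y) (a b : Fin p) :
    (G a b ∨ G b a) ↔ (revG G x y a b ∨ revG G x y b a) :=
  revG_skeleton hG hGxy a b

lemma revG_vstructs (hG : IsAcyclic G) (hGxy : G x y)
    (hcov : ∀ z, G z y ↔ (G z x ∨ z = x)) : SameVStructs G (revG G x y) := by
  intro i k j
  have hadj := revG_adj hG hGxy
  constructor
  · rintro ⟨hik, hjk, hij, hnij, hnji⟩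
    have hnadj : ¬ (revG G x y i j ∨ revG G x y j i) := by
      rw [← hadj i j]; tauto
    have hik' : ¬ (i = x ∧ k = y) := by
      rintro ⟨rfl, rfl⟩
      have := ((hcov j).mp hjk).resolve_right hij.symm
      exact hnji this
    have hjk' : ¬ (j = x ∧ k = y) := by
      rintro ⟨rfl, rfl⟩
      have := ((hcov i).mp hik).resolve_right hij
      exact hnij this
    exact ⟨Or.inl ⟨hik, hik'⟩, Or.inl ⟨hjk, hjk'⟩, hij, fun h => hnadj (Or.inl h),
      fun h => hnadj (Or.inr h)⟩
  · rintro ⟨hik, hjk, hij, hnij, hnji⟩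
    have hnadjG : ¬ (G i j ∨ G j i) := by
      rw [hadj i j]; tauto
    have hGik : G i k := by
      rcases hik with ⟨h, _⟩ | ⟨hiy, hkx⟩
      · exact h
      · rcases hjk with ⟨hjk', hne⟩ | ⟨hjy, _⟩
        · have hGjy : G j y := (hcov j).mpr (Or.inl (hkx ▸ hjk'))
          exact absurd (Or.inr (show G j i by rw [hiy]; exact hGjy)) hnadjG
        · exact absurd (hiy.trans hjy.symm) hij
    have hGjk : G j k := by
      rcases hjk with ⟨h, _⟩ | ⟨hjy, hkx⟩
      · exact h
      · rcases hik with ⟨hik', hne⟩ | ⟨hiy, _⟩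
        · have hGiy : G i y := (hcov i).mpr (Or.inl (hkx ▸ hik'))
          exact absurd (Or.inl (show G i j by rw [hjy]; exact hGiy)) hnadjG
        · exact absurd (hiy.trans hjy.symm) hij
    exact ⟨hGik, hGjk, hij, fun h => hnadjG (Or.inl h), fun h => hnadjG (Or.inr h)⟩

lemma revG_parents {i : Fin p} (hix : i ≠ x) (hiy : i ≠ y) (j : Fin p) :
    revG G x y j i ↔ G j i := by
  unfold revG
  constructor
  · rintro (⟨h, _⟩ | ⟨rfl, rfl⟩)
    · exact h
    · exact absurd rfl hix
  · intro h
    exact Or.inl ⟨h, fun ⟨_, h2⟩ => hiy h2⟩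
end revprops


section glue
variable {p : ℕ}

lemma acyclic_sub {R S : Fin p → Fin p → Prop} (hsub : ∀ a b, R a b → S a b)
    (hS : IsAcyclic S) : IsAcyclic R :=
  fun i hcyc => hS i (Relation.TransGen.mono hsub i i hcyc)

lemma diag_zero_of_compat {B : Matrix (Fin p) (Fin p) ℝ} {G : Fin p → Fin p → Prop}
    (hcomp : Compatible B G) (hG : IsAcyclic G) (i : Fin p) : B i i = 0 := by
  by_contra h
  exact cyc1 hG (hcomp i i h)

lemma compat_revB {B : Matrix (Fin p) (Fin p) ℝ} {G : Fin p → Fin p → Prop} {x y : Fin p}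
    {b r : ℝ} (hcomp : Compatible B G) (hG : IsAcyclic G) (hGxy : G x y)
    (hcov : ∀ z, G z y ↔ (G z x ∨ z = x)) :
    Compatible (revB B x y b r) (revG G x y) := by
  have hxny : x ≠ y := fun h => cyc1 hG (h ▸ hGxy)
  intro i j hne
  unfold revB at hne
  simp only [Matrix.of_apply] at hne
  by_cases hiy : i = y
  · rw [if_pos hiy] at hne
    by_cases hjx : j = x
    · rw [if_pos hjx] at hne; exact absurd rfl hne
    · rw [if_neg hjx] at hne
      have hor : B y j ≠ 0 ∨ B x j ≠ 0 := by
        by_contra hcon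
        push_neg at hcon
        rw [hcon.1, hcon.2] at hne
        simp at hne
      have hGjy : G j y := by
        rcases hor with h | h
        · exact hcomp y j h
        · exact (hcov j).mpr (Or.inl (hcomp x j h))
      refine Or.inl ⟨?_, fun hc => hjx hc.1⟩
      rw [hiy]
      exact hGjy
  · rw [if_neg hiy] at hne
    by_cases hix : i = x
    · rw [if_pos hix] at hne
      by_cases hjy : j = y
      · exact Or.inr ⟨hjy, hix⟩
      · rw [if_neg hjy] at hne
        by_cases hjx : j = x
        · rw [if_pos hjx] at hne
          rw [hjx, diag_zero_of_compat hcomp hG x] at hne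
          simp at hne
        · rw [if_neg hjx] at hne
          have hor : B x j ≠ 0 ∨ B y j ≠ 0 := by
            by_contra hcon
            push_neg at hcon
            rw [hcon.1, hcon.2] at hne
            simp at hne
          have hGjx : G j x := by
            rcases hor with h | h
            · exact hcomp x j h
            · exact ((hcov j).mp (hcomp y j h)).resolve_right hjx
          refine Or.inl ⟨?_, fun hc => hjx hc.1⟩
          rw [hix]
          exact hGjx
    · rw [if_neg hix] at hne
      exact Or.inl ⟨hcomp i j hne, fun hc => hiy hc.2⟩

lemma diagPos_revΩ {Ω : Matrix (Fin p) (Fin p) ℝ} {x y : Fin p} {b q r ωx ωy : ℝ}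
    (hΩ : DiagPos Ω) (hq : q ≠ 0) (hωx : 0 < ωx) (hωy : 0 < ωy) :
    DiagPos (revΩ Ω x y b q r ωx ωy) := by
  constructor
  · exact Matrix.isDiag_diagonal _
  · intro i
    rw [revΩ, Matrix.diagonal_apply_eq]
    by_cases hix : i = x
    · rw [if_pos hix]
      have h1 : 0 < q^2*ωx := by positivity
      nlinarith [sq_nonneg r, hωy.le]
    · rw [if_neg hix]
      by_cases hiy : i = y
      · rw [if_pos hiy]; nlinarith [sq_nonneg b]
      · rw [if_neg hiy]; exact hΩ.2 i

noncomputable def disag (G D : Fin p → Fin p → Prop) : Finset (Fin p × Fin p) :=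
  @Finset.filter _ (fun ab => G ab.1 ab.2 ∧ D ab.2 ab.1) (Classical.decPred _) Finset.univ

lemma mem_disag {G D : Fin p → Fin p → Prop} {ab : Fin p × Fin p} :
    ab ∈ disag G D ↔ (G ab.1 ab.2 ∧ D ab.2 ab.1) := by
  simp [disag]

lemma disag_card_lt {G D : Fin p → Fin p → Prop} {x y : Fin p}
    (hD : IsAcyclic D) (hGxy : G x y) (hDyx : D y x) :
    (disag (revG G x y) D).card < (disag G D).card := by
  have hxny : x ≠ y := fun h => cyc1 hD (h ▸ hDyx)
  have hsubset : disag (revG G x y) D ⊆ disag G D := by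
    intro ab hab
    rw [mem_disag] at hab ⊢
    rcases hab.1 with ⟨h, _⟩ | ⟨h1, h2⟩
    · exact ⟨h, hab.2⟩
    · exfalso
      have : D x y := by rw [← h1, ← h2]; exact hab.2
      exact cyc2 hD this hDyx
  apply Finset.card_lt_card
  rw [Finset.ssubset_iff_of_subset hsubset]
  refine ⟨(x, y), mem_disag.mpr ⟨hGxy, hDyx⟩, ?_⟩
  rw [mem_disag]
  rintro ⟨hrev, -⟩
  rcases hrev with ⟨-, hne2⟩ | ⟨h1, -⟩
  · exact hne2 ⟨rfl, rfl⟩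
  · exact hxny h1

lemma step {E : Type*} [Fintype E] [Nonempty E]
    (D : Fin p → Fin p → Prop) (hD : IsAcyclic D) (I : Set (Fin p)) :
    ∀ n : ℕ, ∀ (G : Fin p → Fin p → Prop) (B : Matrix (Fin p) (Fin p) ℝ)
      (Ω : E → Matrix (Fin p) (Fin p) ℝ),
      (disag G D).card = n →
      IsAcyclic G → Compatible B G → (∀ e, DiagPos (Ω e)) →
      (∀ j, j ∉ I → ∀ e f, Ω e j j = Ω f j j) →
      IEquiv I G D →
      ∃ Bt : Matrix (Fin p) (Fin p) ℝ, ∃ Ωt : E → Matrix (Fin p) (Fin p) ℝ,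
        IsDagMatrix Bt ∧ Compatible Bt D ∧ (∀ e, DiagPos (Ωt e)) ∧
        ∀ e, CovOf B (Ω e) = CovOf Bt (Ωt e) := by
  intro n
  induction n using Nat.strong_induction_on with
  | _ n ih =>
    intro G B Ω hcard hG hcomp hΩpos hconst hequiv
    have hGBsub : ∀ a b, graphOf B a b → G a b := fun a b h => hcomp b a h
    have hGB : IsAcyclic (graphOf B) := acyclic_sub hGBsub hG
    by_cases hdis : (disag G D).card = 0
    · -- base case : no disagreement
      have hempty := Finset.card_eq_zero.mp hdis
      have hGD : ∀ a b, G a b → D a b := by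
        intro a b hab
        rcases (hequiv.1 a b).mp (Or.inl hab) with h | h
        · exact h
        · exfalso
          have hmem : (a, b) ∈ disag G D := mem_disag.mpr ⟨hab, h⟩
          rw [hempty] at hmem
          exact absurd hmem (Finset.notMem_empty _)
      refine ⟨B, Ω, isDagMatrix_of_acyclic hGB, ?_, hΩpos, fun e => rfl⟩
      intro i j h
      exact hGD j i (hcomp i j h)
    · -- inductive step
      have hne : (disag G D).Nonempty := Finset.card_pos.mp (Nat.pos_of_ne_zero hdis)
      obtain ⟨ab, hab⟩ := hne
      rw [mem_disag] at hab
      obtain ⟨x, y, hGxy, hDyx, hcov⟩ :=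
        chickering hG hD hequiv.1 hequiv.2.1 hab.1 hab.2
      have hxny : x ≠ y := fun h => cyc1 hG (h ▸ hGxy)
      have hnGyx : ¬ G y x := fun h => cyc2 hG hGxy h
      have hyI : y ∉ I := by
        intro hy
        have := (hequiv.2.2 y hy x).mp hGxy
        exact cyc2 hD this hDyx
      have hxI : x ∉ I := by
        intro hx
        have := (hequiv.2.2 x hx y).mpr hDyx
        exact hnGyx this
      obtain ⟨e₀⟩ := (inferInstance : Nonempty E)
      set b := B y x with hb
      set ωx := Ω e₀ x x with hωx
      set ωy := Ω e₀ y y with hωy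
      have hωxpos : 0 < ωx := (hΩpos e₀).2 x
      have hωypos : 0 < ωy := (hΩpos e₀).2 y
      set s := ωy + b^2 * ωx with hs
      have hspos : 0 < s := by rw [hs]; nlinarith [sq_nonneg b]
      have hsne : s ≠ 0 := ne_of_gt hspos
      set q := ωy / s with hq
      set r := b * ωx / s with hr
      have hqr : q + r * b = 1 := by
        rw [hq, hr, hs]
        field_simp
      have hqb : q * (b * ωx) = r * ωy := by
        rw [hq, hr]
        field_simp
      have hqpos : 0 < q := div_pos hωypos hspos
      have hG'acyclic : IsAcyclic (revG G x y) := revG_acyclic hG hGxy hcov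
      have hcomp' : Compatible (revB B x y b r) (revG G x y) :=
        compat_revB hcomp hG hGxy hcov
      have hΩ'pos : ∀ e, DiagPos (revΩ (Ω e) x y b q r ωx ωy) := fun e =>
        diagPos_revΩ (hΩpos e) (ne_of_gt hqpos) hωxpos hωypos
      have hconst' : ∀ j, j ∉ I → ∀ e f,
          revΩ (Ω e) x y b q r ωx ωy j j = revΩ (Ω f) x y b q r ωx ωy j j := by
        intro j hj e f
        simp only [revΩ, Matrix.diagonal_apply_eq]
        by_cases hjx : j = x
        · rw [if_pos hjx, if_pos hjx]
        · rw [if_neg hjx, if_neg hjx]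
          by_cases hjy : j = y
          · rw [if_pos hjy, if_pos hjy]
          · rw [if_neg hjy, if_neg hjy]
            exact hconst j hj e f
      have hequiv' : IEquiv I (revG G x y) D := by
        refine ⟨?_, ?_, ?_⟩
        · intro a c
          exact ((revG_skeleton hG hGxy a c).symm).trans (hequiv.1 a c)
        · intro i k j
          exact ((revG_vstructs hG hGxy hcov i k j).symm).trans (hequiv.2.1 i k j)
        · intro i hi j
          have hix : i ≠ x := fun h => hxI (h ▸ hi)
          have hiy : i ≠ y := fun h => hyI (h ▸ hi)
          exact (revG_parents hix hiy j).trans (hequiv.2.2 i hi j)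
      have hcard' : (disag (revG G x y) D).card < n := by
        rw [← hcard]
        exact disag_card_lt hD hGxy hDyx
      obtain ⟨Bt, Ωt, h1, h2, h3, h4⟩ :=
        ih _ hcard' (revG G x y) (revB B x y b r) (fun e => revΩ (Ω e) x y b q r ωx ωy)
          rfl hG'acyclic hcomp' hΩ'pos hconst' hequiv'
      refine ⟨Bt, Ωt, h1, h2, h3, fun e => ?_⟩
      rw [← h4 e]
      have hdet : IsUnit (1 - B).det := by
        rw [det_one_sub_of_isDag (isDagMatrix_of_acyclic hGB)]
        exact isUnit_one
      have hΩex : Ω e x x = ωx := by rw [hωx]; exact hconst x hxI e e₀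
      have hΩey : Ω e y y = ωy := by rw [hωy]; exact hconst y hyI e e₀
      have hBxy : B x y = 0 := by
        by_contra h
        exact hnGyx (hcomp x y h)
      exact covOf_rev hxny B (Ω e) hb.symm (diag_zero_of_compat hcomp hG x)
        (diag_zero_of_compat hcomp hG y) hBxy hqr hqb (hΩpos e).1 hΩex hΩey hdet
end glue



/-- Lemma (I-MAPs are distribution equivalent, graphical form): if a DAG `𝒟` is
`𝓘`-equivalent to the graph `G(B)` of a model `(B, {Ω^e}_{e∈ℰ})`, where
`𝓘 = { j : ∃ e f, Ω^e_jj ≠ Ω^f_jj }`, then there is a model `(B~, {Ω~^e}_{e∈ℰ})` with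
`B~` compatible with `𝒟` entailing the same covariances in every environment. -/
theorem iequiv_graph_is_distribution_equivalent
    {p : ℕ} {E : Type*} [Fintype E]
    (B : Matrix (Fin p) (Fin p) ℝ) (Ω : E → Matrix (Fin p) (Fin p) ℝ)
    (hB : IsDagMatrix B) (hΩ : ∀ e, DiagPos (Ω e))
    (D : Fin p → Fin p → Prop) (hD : IsAcyclic D)
    (hequiv : IEquiv {j : Fin p | ∃ e f : E, Ω e j j ≠ Ω f j j} (graphOf B) D) :
    ∃ Bt : Matrix (Fin p) (Fin p) ℝ, ∃ Ωt : E → Matrix (Fin p) (Fin p) ℝ,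
      IsDagMatrix Bt ∧ Compatible Bt D ∧ (∀ e, DiagPos (Ωt e)) ∧
      ∀ e, CovOf B (Ω e) = CovOf Bt (Ωt e) := by
  classical
  by_cases hE : Nonempty E
  · haveI := hE
    have hGB : IsAcyclic (graphOf B) := acyclic_graphOf_of_isDag hB
    refine step D hD {j : Fin p | ∃ e f : E, Ω e j j ≠ Ω f j j}
      (disag (graphOf B) D).card (graphOf B) B Ω rfl hGB (fun i j h => h) hΩ ?_ hequiv
    intro j hj e f
    by_contra h
    exact hj ⟨e, f, h⟩
  · refine ⟨0, Ω, ⟨Equiv.refl _, fun i j _ => rfl⟩, ?_, hΩ, ?_⟩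
    · intro i j h
      exact absurd rfl h
    · intro e
      exact absurd (Nonempty.intro e) hE
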